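/- Let M be an ordered matching in a simple graph G and let p be an M-admissible path for a vertex v covered by M. Then (1) p is a simple path, and (2) the length of p is odd. -/

import Mathlib

open SimpleGraph

namespace DS

variable {V : Type*}

/-- The set of edges of a matching presented by the endpoint functions `u`, `v`. -/
def omEdges {s : ℕ} (u v : Fin s → V) : Set (Sym2 V) := {e | ∃ i, e = s(u i, v i)}

/-- `(u, v)` describes a matching of size `s` in `G`: the `2s` endpoints are pairwise
distinct (so the edges are pairwise disjoint) and each pair `{u i, v i}` is an edge. -/
def IsMatchingPair (G : SimpleGraph V) {s : ℕ} (u v : Fin s → V) : Prop :=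
  Function.Injective (Sum.elim u v) ∧ ∀ i, G.Adj (u i) (v i)

/-- `(u, v)` describes an ordered matching: a matching such that `{u 1, …, u s}` is an
independent set and `{u i, v j} ∈ E(G)` implies `i ≤ j`. -/
def IsOrderedMatching (G : SimpleGraph V) {s : ℕ} (u v : Fin s → V) : Prop :=
  IsMatchingPair G u v ∧ (∀ i j, ¬ G.Adj (u i) (u j)) ∧
    ∀ i j, G.Adj (u i) (v j) → i ≤ j

/-- The matching number of `G`. -/
noncomputable def nu (G : SimpleGraph V) : ℕ :=
  sSup {s | ∃ u v : Fin s → V, IsMatchingPair G u v}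

/-- The ordered matching number of `G`. -/
noncomputable def nu0 (G : SimpleGraph V) : ℕ :=
  sSup {s | ∃ u v : Fin s → V, IsOrderedMatching G u v}

/-- A walk is `M`-alternating if its edges are alternately in `M` and not in `M`. -/
def IsAlt {G : SimpleGraph V} (M : Set (Sym2 V)) {a b : V} (w : G.Walk a b) : Prop :=
  List.Chain' (fun e f => (e ∈ M ↔ f ∉ M)) w.edges

/-- The walk `w` is nonempty and its first and last edges belong to `M`. -/
def FirstLastInM {G : SimpleGraph V} (M : Set (Sym2 V)) {a b : V} (w : G.Walk a b) : Prop :=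
  ∃ h : w.edges ≠ [], w.edges.head h ∈ M ∧ w.edges.getLast h ∈ M

/-- `w` is an `M`-admissible path for the vertex `x` (with respect to the ordered matching
presented by `(u, v)`): an `M`-alternating path with origin `x` whose first and last
edges are in `M`, each of whose edges has an end in `A = range u` and an end in
`B = range v`. -/
def IsAdmissible {G : SimpleGraph V} {s : ℕ} (u v : Fin s → V) {a b : V}
    (w : G.Walk a b) (x : V) : Prop :=
  a = x ∧ IsAlt (omEdges u v) w ∧ FirstLastInM (omEdges u v) w ∧
    ∀ e ∈ w.edges, ∃ i j, e = s(u i, v j)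

/-- `ℓ(x)`: the length of a longest `M`-admissible path for `x`. -/
noncomputable def ellv (G : SimpleGraph V) {s : ℕ} (u v : Fin s → V) (x : V) : ℕ :=
  sSup {n | ∃ (b : V) (w : G.Walk x b), IsAdmissible u v w x ∧ w.length = n}

/-- `ℓ(M)`: the length of a longest `M`-alternating path in `G`. -/
noncomputable def ellM (G : SimpleGraph V) (M : Set (Sym2 V)) : ℕ :=
  sSup {n | ∃ (a b : V) (w : G.Walk a b), IsAlt M w ∧ w.length = n}

/-- `ℓ₀(M) = max {ℓ(x) : x ∈ B}`. -/
noncomputable def ell0 (G : SimpleGraph V) {s : ℕ} (u v : Fin s → V) : ℕ :=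
  sSup {n | ∃ i : Fin s, ellv G u v (v i) = n}

/-- `ℓ₁(M) = max {ℓ(x) + ℓ(y) + 1 : {x, y} ∈ E(G[B])}` (with the convention that this
is `0` when `B` is independent, since `sSup ∅ = 0`). -/
noncomputable def ell1 (G : SimpleGraph V) {s : ℕ} (u v : Fin s → V) : ℕ :=
  sSup {n | ∃ i j : Fin s, G.Adj (v i) (v j) ∧ ellv G u v (v i) + ellv G u v (v j) + 1 = n}

/-- `ℓ(G) = min {ℓ(M) : M a maximum ordered matching of G}`. -/
noncomputable def ellG (G : SimpleGraph V) : ℕ :=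
  sInf {n | ∃ u v : Fin (nu0 G) → V, IsOrderedMatching G u v ∧ ellM G (omEdges u v) = n}

open MvPolynomial in
/-- The `n`-th symbolic power `J(G)^{(n)} = ⋂_{{u,v} ∈ E(G)} (x_u, x_v)^n` of the cover
ideal of `G`. -/
noncomputable def symbPow (K : Type*) [Field K] (G : SimpleGraph V) (n : ℕ) :
    Ideal (MvPolynomial V K) :=
  ⨅ (p : V × V) (_ : G.Adj p.1 p.2), (Ideal.span {X p.1, X p.2}) ^ n

/-- The cover ideal `J(G) = ⋂_{{u,v} ∈ E(G)} (x_u, x_v)`. -/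
noncomputable def coverIdeal (K : Type*) [Field K] (G : SimpleGraph V) :
    Ideal (MvPolynomial V K) :=
  symbPow K G 1

/-- `depth R/I`: the length of a maximal `R/I`-regular sequence contained in the maximal
homogeneous ideal `(x_1, …, x_r)` of `R = K[x_1, …, x_r]`. -/
noncomputable def depthQ (K : Type*) [Field K] (I : Ideal (MvPolynomial V K)) : ℕ :=
  sSup {n | ∃ rs : List (MvPolynomial V K), rs.length = n ∧
    (∀ f ∈ rs, f ∈ Ideal.span (Set.range (MvPolynomial.X : V → MvPolynomial V K))) ∧
    RingTheory.Sequence.IsRegular (MvPolynomial V K ⧸ I) rs}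

/-- The stability index of the symbolic depth function of `J(G)`:
`sdst(J(G)) = min {n₀ ≥ 1 : depth R/J(G)^{(n)} = r − ν₀(G) − 1 for all n ≥ n₀}`. -/
noncomputable def sdst (K : Type*) [Field K] [Fintype V] (G : SimpleGraph V) : ℕ :=
  sInf {n0 | 1 ≤ n0 ∧ ∀ n, n0 ≤ n →
    depthQ K (symbPow K G n) = Fintype.card V - nu0 G - 1}

/-- The stability index of the depth function of `J(G)`:
the least `n₀ ≥ 1` such that `depth R/J(G)^n` is constant for `n ≥ n₀` (hence equal to
its limit value). -/
noncomputable def dst (K : Type*) [Field K] [Fintype V] (G : SimpleGraph V) : ℕ :=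
  sInf {n0 | 1 ≤ n0 ∧ ∀ m n, n0 ≤ m → n0 ≤ n →
    depthQ K (coverIdeal K G ^ m) = depthQ K (coverIdeal K G ^ n)}

end DS


section Aux
variable {V : Type*} {G : SimpleGraph V}

lemma walk_start_mem_head : ∀ {a b : V} (w : G.Walk a b) (h : w.edges ≠ []),
    a ∈ w.edges.head h := by
  intro a b w h
  cases w with
  | nil => simp at h
  | cons h' w' => simp [SimpleGraph.Walk.edges_cons]

lemma walk_end_mem_getLast {a b : V} (w : G.Walk a b) (h : w.edges ≠ []) :
    b ∈ w.edges.getLast h := by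
  have h2 : w.reverse.edges ≠ [] := by
    simp [SimpleGraph.Walk.edges_reverse, h]
  have := walk_start_mem_head w.reverse h2
  simp only [SimpleGraph.Walk.edges_reverse, List.head_reverse] at this
  exact this

lemma alt_odd {α : Type*} (P : α → Prop) :
    ∀ (l : List α) (h : l ≠ []), List.Chain' (fun a b => P a ↔ ¬ P b) l →
      ((P (l.head h) ↔ P (l.getLast h)) ↔ Odd l.length) := by
  intro l
  induction l with
  | nil => simp
  | cons a t ih =>
    intro h hc
    cases t with
    | nil => simp
    | cons b t' =>
      have hc' := (List.isChain_cons_cons.mp hc)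
      have ih' := ih (by simp) hc'.2
      rw [List.getLast_cons (by simp)]
      simp only [List.head_cons] at ih' ⊢
      have hlen : (a :: b :: t').length = (b :: t').length + 1 := rfl
      rw [hlen, Nat.odd_add_one]
      have h1 := hc'.1
      tauto

end Aux


section Key
variable {V : Type*} {G : SimpleGraph V}

lemma key_lemma {ι : Type*} [LinearOrder ι] (p q : ι → V) (M : Set (Sym2 V))
    (hpinj : Function.Injective p) (hqinj : Function.Injective q)
    (hpq : ∀ a k, p a ≠ q k)
    (hMdef : ∀ e, e ∈ M ↔ ∃ i, e = s(p i, q i))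
    (hlt : ∀ a i, G.Adj (p a) (q i) → a = i ∨ a < i) :
    ∀ n : ℕ,
      (∀ (i : ι) (b : V) (w : G.Walk (p i) b), w.length = n →
        List.Chain' (fun e f => (e ∈ M ↔ f ∉ M)) w.edges →
        (∀ h : w.edges ≠ [], w.edges.head h ∈ M) →
        (∀ e ∈ w.edges, ∃ a c, e = s(p a, q c)) →
        w.support.Nodup ∧ ∀ y ∈ w.support, ∃ k, k ≤ i ∧ (y = p k ∨ y = q k)) ∧
      (∀ (i : ι) (b : V) (w : G.Walk (q i) b), w.length = n →
        List.Chain' (fun e f => (e ∈ M ↔ f ∉ M)) w.edges →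
        (∀ h : w.edges ≠ [], w.edges.head h ∉ M) →
        (∀ e ∈ w.edges, ∃ a c, e = s(p a, q c)) →
        w.support.Nodup ∧ ∀ y ∈ w.support,
          y = q i ∨ ∃ k, k < i ∧ (y = p k ∨ y = q k)) := by
  intro n
  induction n with
  | zero =>
    constructor
    · intro i b w hlen _ _ _
      cases w with
      | nil =>
        refine ⟨by simp, ?_⟩
        intro y hy
        simp at hy
        exact ⟨i, le_refl _, Or.inl hy⟩
      | cons h' w' => simp [SimpleGraph.Walk.length_cons] at hlen
    · intro i b w hlen _ _ _
      cases w with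
      | nil =>
        refine ⟨by simp, ?_⟩
        intro y hy
        simp at hy
        exact Or.inl hy
      | cons h' w' => simp [SimpleGraph.Walk.length_cons] at hlen
  | succ n ih =>
    constructor
    · -- start at p i, first edge in M
      intro i b w hlen halt hhead hstr
      cases w with
      | nil => simp at hlen
      | @cons _ c _ hadj w' =>
        rw [SimpleGraph.Walk.edges_cons] at halt hhead hstr
        have hfirst : s(p i, c) ∈ M := hhead (by simp)
        obtain ⟨k, hk⟩ := (hMdef _).mp hfirst
        have hc : c = q i := by
          rcases Sym2.eq_iff.mp hk with ⟨h1, h2⟩ | ⟨h1, h2⟩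
          · rw [h2, hpinj h1]
          · exact absurd h1 (hpq i k)
        subst hc
        have hlen' : w'.length = n := by
          simpa [SimpleGraph.Walk.length_cons] using hlen
        have halt' := halt.tail
        have hhead' : ∀ h : w'.edges ≠ [], w'.edges.head h ∉ M := by
          intro h
          obtain ⟨f, t, hft⟩ := List.exists_cons_of_ne_nil h
          have hhd : w'.edges.head h = f := by simp [hft]
          rw [hhd]
          rw [hft] at halt
          exact (List.isChain_cons_cons.mp halt).1.mp hfirst
        have hstr' : ∀ e ∈ w'.edges, ∃ a c, e = s(p a, q c) :=fun e he =>
          hstr e (List.mem_cons_of_mem _ he)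
        obtain ⟨hnd, hbound⟩ := (ih).2 i b w' hlen' halt' hhead' hstr'
        rw [SimpleGraph.Walk.support_cons]
        refine ⟨List.nodup_cons.mpr ⟨?_, hnd⟩, ?_⟩
        · intro hmem
          rcases hbound _ hmem with h1 | ⟨k', hk', h1 | h1⟩
          · exact hpq i i h1
          · exact absurd (hpinj h1) (ne_of_gt hk')
          · exact hpq i k' h1
        · intro y hy
          rcases List.mem_cons.mp hy with h1 | h1
          · exact ⟨i, le_refl _, Or.inl h1⟩
          · rcases hbound _ h1 with h2 | ⟨k', hk', h2⟩
            · exact ⟨i, le_refl _, Or.inr h2⟩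
            · exact ⟨k', le_of_lt hk', h2⟩
    · -- start at q i, first edge not in M
      intro i b w hlen halt hhead hstr
      cases w with
      | nil => simp at hlen
      | @cons _ c _ hadj w' =>
        rw [SimpleGraph.Walk.edges_cons] at halt hhead hstr
        have hfirst : s(q i, c) ∉ M := hhead (by simp)
        obtain ⟨a', c', hac⟩ := hstr _ List.mem_cons_self
        have hc : c = p a' ∧ c' = i := by
          rcases Sym2.eq_iff.mp hac with ⟨h1, h2⟩ | ⟨h1, h2⟩
          · exact absurd h1.symm (hpq a' i)
          · exact ⟨h2, (hqinj h1).symm⟩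
        obtain ⟨hc, hc'⟩ := hc
        subst hc
        subst hc'
        have hadj' : G.Adj (p a') (q c') := hadj.symm
        have hlt' : a' < c' := by
          rcases hlt a' c' hadj' with h1 | h1
          · exact absurd ((hMdef _).mpr ⟨c', by rw [h1]; exact Sym2.eq_swap⟩) hfirst
          · exact h1
        have hlen' : w'.length = n := by
          simpa [SimpleGraph.Walk.length_cons] using hlen
        have halt' := halt.tail
        have hhead' : ∀ h : w'.edges ≠ [], w'.edges.head h ∈ M := by
          intro h
          obtain ⟨f, t, hft⟩ := List.exists_cons_of_ne_nil h
          have hhd : w'.edges.head h = f := by simp [hft]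
          rw [hhd]
          rw [hft] at halt
          by_contra hfM
          exact hfirst ((List.isChain_cons_cons.mp halt).1.mpr hfM)
        have hstr' : ∀ e ∈ w'.edges, ∃ a c, e = s(p a, q c) := fun e he =>
          hstr e (List.mem_cons_of_mem _ he)
        obtain ⟨hnd, hbound⟩ := (ih).1 a' b w' hlen' halt' hhead' hstr'
        rw [SimpleGraph.Walk.support_cons]
        refine ⟨List.nodup_cons.mpr ⟨?_, hnd⟩, ?_⟩
        · intro hmem
          rcases hbound _ hmem with ⟨k', hk', h1 | h1⟩
          · exact hpq k' c' h1.symm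
          · exact absurd (hqinj h1) (ne_of_gt (lt_of_le_of_lt hk' hlt'))
        · intro y hy
          rcases List.mem_cons.mp hy with h1 | h1
          · exact Or.inl h1
          · obtain ⟨k', hk', h2⟩ := hbound _ h1
            exact Or.inr ⟨k', lt_of_le_of_lt hk' hlt', h2⟩

end Key

/-- Let `M` be an ordered matching in `G` and `p` an `M`-admissible path for a vertex `x`
covered by `M`. Then `p` is a simple path and its length is odd. -/

theorem stmt_2 {V : Type*} [Fintype V] (G : SimpleGraph V) {s : ℕ} (u v : Fin s → V)
    (hM : DS.IsOrderedMatching G u v) (x : V)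
    (hx : x ∈ Set.range u ∪ Set.range v)
    {b : V} (w : G.Walk x b) (hadm : DS.IsAdmissible u v w x) :
    w.support.Nodup ∧ Odd w.length := by
  classical
  obtain ⟨⟨hinj, hadjM⟩, hindep, hord⟩ := hM
  obtain ⟨hstart, halt, ⟨hne, hhead, hlast⟩, hstr⟩ := hadm
  have hu : Function.Injective u := fun a b h => by
    have := hinj (show Sum.elim u v (Sum.inl a) = Sum.elim u v (Sum.inl b) from h)
    simpa using this
  have hv : Function.Injective v := fun a b h => by
    have := hinj (show Sum.elim u v (Sum.inr a) = Sum.elim u v (Sum.inr b) from h)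
    simpa using this
  have huv : ∀ a k, u a ≠ v k := fun a k h => by
    have := hinj (show Sum.elim u v (Sum.inl a) = Sum.elim u v (Sum.inr k) from h)
    simp at this
  have hMdef : ∀ e, e ∈ DS.omEdges u v ↔ ∃ i, e = s(u i, v i) := fun e => Iff.rfl
  have halt' : List.Chain' (fun e f => (e ∈ DS.omEdges u v ↔ f ∉ DS.omEdges u v)) w.edges :=
    halt
  have hlt1 : ∀ a i, G.Adj (u a) (v i) → a = i ∨ a < i := fun a i h =>
    (hord a i h).lt_or_eq.symm
  constructor
  · -- Nodup
    have hxe : x ∈ w.edges.head hne := walk_start_mem_head w hne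
    obtain ⟨k, hk⟩ := (hMdef _).mp hhead
    rw [hk] at hxe
    rcases Sym2.mem_iff.mp hxe with h1 | h1
    · subst h1
      exact (((key_lemma u v (DS.omEdges u v) hu hv huv hMdef hlt1) w.length).1
        k b w rfl halt' (fun _ => hhead) hstr).1
    · have hbe : b ∈ w.edges.getLast hne := walk_end_mem_getLast w hne
      obtain ⟨m, hm⟩ := (hMdef _).mp hlast
      rw [hm] at hbe
      rcases Sym2.mem_iff.mp hbe with h2 | h2
      · -- b = u m : use the reversed walk
        subst h2
        have hne' : w.reverse.edges ≠ [] := by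
          simp [SimpleGraph.Walk.edges_reverse, hne]
        have haltR : List.Chain'
            (fun e f => (e ∈ DS.omEdges u v ↔ f ∉ DS.omEdges u v)) w.reverse.edges := by
          rw [SimpleGraph.Walk.edges_reverse]; show List.IsChain _ _; rw [List.isChain_reverse]
          refine List.IsChain.imp ?_ halt'
          intro e f h
          show f ∈ DS.omEdges u v ↔ e ∉ DS.omEdges u v
          tauto
        have hheadR : ∀ h : w.reverse.edges ≠ [],
            w.reverse.edges.head h ∈ DS.omEdges u v := by
          intro h
          have he : w.reverse.edges.head h = w.edges.getLast hne := by
            simp [SimpleGraph.Walk.edges_reverse, List.head_reverse]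
          rw [he]; exact hlast
        have hstrR : ∀ e ∈ w.reverse.edges, ∃ a c, e = s(u a, v c) := by
          intro e he
          rw [SimpleGraph.Walk.edges_reverse, List.mem_reverse] at he
          exact hstr e he
        have := (((key_lemma u v (DS.omEdges u v) hu hv huv hMdef hlt1)
          w.reverse.length).1 m x w.reverse rfl haltR hheadR hstrR).1
        rw [SimpleGraph.Walk.support_reverse, List.nodup_reverse] at this
        exact this
      · -- x = v k and b = v m : use the dual order with roles of u, v swapped
        subst h1
        have hvu : ∀ a k, v a ≠ u k := fun a k h => (huv k a h.symm).elim
        have hMdef' : ∀ e, e ∈ DS.omEdges u v ↔ ∃ i, e = s(v i, u i) := fun e => by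
          constructor
          · rintro ⟨i, rfl⟩; exact ⟨i, Sym2.eq_swap⟩
          · rintro ⟨i, rfl⟩; exact ⟨i, Sym2.eq_swap⟩
        have hlt2 : ∀ a i : (Fin s)ᵒᵈ, G.Adj (v a) (u i) → a = i ∨ a < i := by
          intro a i h
          rcases (hord i a h.symm).lt_or_eq with h1 | h1
          · exact Or.inr h1
          · exact Or.inl h1.symm
        have hstr2 : ∀ e ∈ w.edges, ∃ a c, e = s(v a, u c) := fun e he => by
          obtain ⟨a, c, rfl⟩ := hstr e he
          exact ⟨c, a, Sym2.eq_swap⟩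
        exact (((key_lemma (ι := (Fin s)ᵒᵈ) v u (DS.omEdges u v) hv hu hvu hMdef' hlt2)
          w.length).1 k b w rfl halt' (fun _ => hhead) hstr2).1
  · -- Odd length
    rw [← SimpleGraph.Walk.length_edges]
    exact (alt_odd (· ∈ DS.omEdges u v) w.edges hne halt').mp (iff_of_true hhead hlast)
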